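/- For T_A > T_B > 0 and E > 0, there exist a natural number n and a unitary U on (ℂ²)^{⊗ 2n} such that tr(U ρ U† H) < tr(ρ H), where ρ = γ_{T_A}^{⊗ n} ⊗ γ_{T_B}^{⊗ n} with γ_T = diag(1, e^{−E/T})/(1 + e^{−E/T}), and H is the diagonal Hamiltonian with H e_b = E · wgt(b) · e_b for b ∈ {0,1}^{2n}. -/

import Mathlib

/-- The Gibbs occupation probability of level `j ∈ {0,1}` of a two-level
system with energy gap `E` at temperature `T`. -/
noncomputable def qubitProb (E T : ℝ) (j : Fin 2) : ℝ :=
  (if j = 0 then 1 else Real.exp (-E / T)) / (1 + Real.exp (-E / T))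

open Matrix Finset

variable {I : Type*} [Fintype I] [DecidableEq I]

lemma perm_star (σ : Equiv.Perm I) :
    star (σ.toPEquiv.toMatrix : Matrix I I ℂ) = σ.symm.toPEquiv.toMatrix := by
  ext i j
  simp [Matrix.star_apply, PEquiv.toMatrix_apply, Equiv.toPEquiv_apply,
    apply_ite (star : ℂ → ℂ), Option.mem_def]
  have : σ j = i ↔ σ.symm i = j := by
    constructor
    · intro h; rw [← h]; exact σ.symm_apply_apply j
    · intro h; rw [← h]; exact σ.apply_symm_apply i
  rw [if_congr this rfl rfl]

lemma perm_mem_unitary (σ : Equiv.Perm I) :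
    (σ.toPEquiv.toMatrix : Matrix I I ℂ) ∈ Matrix.unitaryGroup I ℂ := by
  rw [Matrix.mem_unitaryGroup_iff, perm_star, ← PEquiv.toMatrix_trans,
    ← Equiv.toPEquiv_trans]
  simp [Equiv.self_trans_symm, Equiv.toPEquiv_refl]

lemma perm_conj_diag (σ : Equiv.Perm I) (d : I → ℂ) :
    (σ.toPEquiv.toMatrix : Matrix I I ℂ) * Matrix.diagonal d * star (σ.toPEquiv.toMatrix : Matrix I I ℂ)
      = Matrix.diagonal (d ∘ σ) := by
  rw [perm_star, PEquiv.toMatrix_toPEquiv_mul, PEquiv.mul_toMatrix_toPEquiv, Equiv.symm_symm,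
    Matrix.submatrix_submatrix]
  simpa using Matrix.submatrix_diagonal_equiv d σ


lemma swap_sum_lt (p h : I → ℝ) (b0 b1 : I) (hne : b0 ≠ b1)
    (hp : p b1 < p b0) (hh : h b1 < h b0) :
    ∑ c, p (Equiv.swap b0 b1 c) * h c < ∑ c, p c * h c := by
  have key : ∑ c, (p (Equiv.swap b0 b1 c) * h c - p c * h c)
      = (p b1 - p b0) * (h b0 - h b1) := by
    rw [← Finset.sum_subset (Finset.subset_univ ({b0, b1} : Finset I))]
    · rw [Finset.sum_pair hne]
      simp [Equiv.swap_apply_left, Equiv.swap_apply_right]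
      ring
    · intro c _ hc
      simp only [Finset.mem_insert, Finset.mem_singleton, not_or] at hc
      rw [Equiv.swap_apply_of_ne_of_ne hc.1 hc.2]
      ring
  rw [Finset.sum_sub_distrib] at key
  nlinarith [key]

/-- For any two temperatures `T_A > T_B > 0` and equal energy gaps, some
number `n` of hot/cold qubit pairs admits a unitary heat engine. -/
theorem stmt_12 (E T_A T_B : ℝ) (hE : 0 < E) (hTB : 0 < T_B) (hT : T_B < T_A) :
    ∃ n : ℕ, ∃ U ∈ Matrix.unitaryGroup (Fin (n + n) → Fin 2) ℂ,
      (Matrix.trace (U *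
          Matrix.diagonal (fun b : Fin (n + n) → Fin 2 =>
            ((∏ i : Fin (n + n), qubitProb E (if (i : ℕ) < n then T_A else T_B) (b i) : ℝ) : ℂ)) *
          star U *
          Matrix.diagonal (fun b : Fin (n + n) → Fin 2 =>
            ((E * ∑ i, ((b i : ℕ) : ℝ) : ℝ) : ℂ)))).re <
      (Matrix.trace (
          Matrix.diagonal (fun b : Fin (n + n) → Fin 2 =>
            ((∏ i : Fin (n + n), qubitProb E (if (i : ℕ) < n then T_A else T_B) (b i) : ℝ) : ℂ)) *
          Matrix.diagonal (fun b : Fin (n + n) → Fin 2 =>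
            ((E * ∑ i, ((b i : ℕ) : ℝ) : ℝ) : ℂ)))).re := by
  have hTA : 0 < T_A := hTB.trans hT
  obtain ⟨m, hm⟩ := exists_nat_gt (T_B / (T_A - T_B))
  set N : ℕ := m + 2 with hN
  set b0 : Fin (N + N) → Fin 2 := fun i => if (i : ℕ) < N then 1 else 0 with hb0
  set b1 : Fin (N + N) → Fin 2 := fun i => if (i : ℕ) < N + 1 then 0 else 1 with hb1
  have hne : b0 ≠ b1 := by
    intro h
    have := congrFun h ⟨0, by omega⟩
    simp [hb0, hb1, hN] at this
  set σ : Equiv.Perm (Fin (N + N) → Fin 2) := Equiv.swap b0 b1 with hσ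
  set p : (Fin (N + N) → Fin 2) → ℝ :=
    fun b => ∏ i : Fin (N + N), qubitProb E (if (i : ℕ) < N then T_A else T_B) (b i) with hp
  set h : (Fin (N + N) → Fin 2) → ℝ := fun b => E * ∑ i, ((b i : ℕ) : ℝ) with hh
  refine ⟨N, σ.toPEquiv.toMatrix, perm_mem_unitary σ, ?_⟩
  rw [perm_conj_diag]
  rw [Matrix.diagonal_mul_diagonal, Matrix.diagonal_mul_diagonal,
    Matrix.trace_diagonal, Matrix.trace_diagonal]
  simp only [Function.comp_apply, ← Complex.ofReal_mul, Complex.re_sum, Complex.ofReal_re]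
  -- now a real inequality
  refine swap_sum_lt p h b0 b1 hne ?_ ?_
  · -- probabilities
    set xA := Real.exp (-E / T_A) with hxA
    set xB := Real.exp (-E / T_B) with hxB
    have hxA0 : 0 < xA := Real.exp_pos _
    have hxB0 : 0 < xB := Real.exp_pos _
    have haA : (0:ℝ) < 1 + xA := by linarith
    have haB : (0:ℝ) < 1 + xB := by linarith
    have hpb0 : p b0 = xA ^ N / ((1 + xA) ^ N * (1 + xB) ^ N) := by
      simp only [hp]
      rw [Fin.prod_univ_add (f := fun i : Fin (N + N) =>
        qubitProb E (if (i : ℕ) < N then T_A else T_B) (b0 i))]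
      have h1 : ∀ i : Fin N,
          qubitProb E (if ((Fin.castAdd N i : Fin (N+N)) : ℕ) < N then T_A else T_B)
            (b0 (Fin.castAdd N i)) = xA / (1 + xA) := by
        intro i
        have : ((Fin.castAdd N i : Fin (N+N)) : ℕ) < N := by simp [i.isLt]
        simp [this, hb0, qubitProb, hxA, show (1 : Fin 2) ≠ 0 by decide]
      have h2 : ∀ i : Fin N,
          qubitProb E (if ((Fin.natAdd N i : Fin (N+N)) : ℕ) < N then T_A else T_B)
            (b0 (Fin.natAdd N i)) = 1 / (1 + xB) := by
        intro i
        have : ¬ ((Fin.natAdd N i : Fin (N+N)) : ℕ) < N := by simp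
        simp [this, hb0, qubitProb, hxB]
      rw [Finset.prod_congr rfl (fun i _ => h1 i), Finset.prod_congr rfl (fun i _ => h2 i),
        Finset.prod_const, Finset.prod_const, Finset.card_fin]
      rw [div_pow, div_pow, one_pow, div_mul_div_comm, mul_one]
    have hpb1 : p b1 = xB ^ (m + 1) / ((1 + xA) ^ N * (1 + xB) ^ N) := by
      simp only [hp]
      rw [Fin.prod_univ_add (f := fun i : Fin (N + N) =>
        qubitProb E (if (i : ℕ) < N then T_A else T_B) (b1 i))]
      have h1 : ∀ i : Fin N,
          qubitProb E (if ((Fin.castAdd N i : Fin (N+N)) : ℕ) < N then T_A else T_B)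
            (b1 (Fin.castAdd N i)) = 1 / (1 + xA) := by
        intro i
        have hlt : ((Fin.castAdd N i : Fin (N+N)) : ℕ) < N := by simp [i.isLt]
        have hlt' : ((Fin.castAdd N i : Fin (N+N)) : ℕ) < N + 1 := by omega
        have hi' : (i : ℕ) < N + 1 := by have := i.isLt; omega
        simp [hlt, hlt', hi', hb1, qubitProb, hxA]
      have h2 : ∀ i : Fin N,
          qubitProb E (if ((Fin.natAdd N i : Fin (N+N)) : ℕ) < N then T_A else T_B)
            (b1 (Fin.natAdd N i))
          = if (i : ℕ) < 1 then 1 / (1 + xB) else xB / (1 + xB) := by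
        intro i
        have hlt : ¬ ((Fin.natAdd N i : Fin (N+N)) : ℕ) < N := by simp
        by_cases hi : (i : ℕ) < 1
        · have hc1 : (i:ℕ) + N < N + 1 := by omega
          have hc2 : N + (i:ℕ) < N + 1 := by omega
          have hi0 : i = 0 := by rw [Fin.ext_iff]; simpa using Nat.lt_one_iff.mp hi
          simp [hlt, hb1, hc1, hc2, hi, hi0, qubitProb, hxB]
        · have hc1 : ¬ ((i:ℕ) + N < N + 1) := by omega
          have hc2 : ¬ (N + (i:ℕ) < N + 1) := by omega
          have hi0 : i ≠ 0 := by rintro rfl; simp at hi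
          simp [hlt, hb1, hc1, hc2, hi, hi0, qubitProb, hxB, show (1 : Fin 2) ≠ 0 by decide]
      rw [Finset.prod_congr rfl (fun i _ => h1 i), Finset.prod_congr rfl (fun i _ => h2 i),
        Finset.prod_const, Finset.card_fin]
      have : ∏ i : Fin N, (if (i : ℕ) < 1 then 1 / (1 + xB) else xB / (1 + xB))
          = (1 / (1 + xB)) * (xB / (1 + xB)) ^ (m + 1) := by
        rw [hN, Fin.prod_univ_succ]
        simp only [Fin.val_zero, Nat.zero_lt_one, if_true]
        congr 1
        have hstep : ∀ i : Fin (m+1),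
            (if ((i.succ : Fin (m+2)) : ℕ) < 1 then 1/(1+xB) else xB/(1+xB))
              = xB/(1+xB) := by
          intro i; simp [Fin.val_succ]
        rw [Finset.prod_congr rfl (fun i _ => hstep i), Finset.prod_const, Finset.card_fin]
      rw [this, hN]
      have hA0 : (1 + xA) ≠ 0 := haA.ne'
      have hB0 : (1 + xB) ≠ 0 := haB.ne'
      rw [div_pow, one_pow, div_pow]
      field_simp
      ring
    rw [hpb0, hpb1]
    have hsub : 0 < T_A - T_B := by linarith
    have hmT : ((m:ℝ)+2) * T_B < ((m:ℝ)+1) * T_A := by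
      have := (div_lt_iff₀ hsub).mp hm
      nlinarith
    have hkey : xB ^ (m + 1) < xA ^ N := by
      rw [hxA, hxB, ← Real.exp_nat_mul, ← Real.exp_nat_mul, Real.exp_lt_exp, hN]
      push_cast
      rw [show ((m:ℝ)+1) * (-E/T_B) = -(((m:ℝ)+1) * E / T_B) by ring,
          show ((m:ℝ)+2) * (-E/T_A) = -(((m:ℝ)+2) * E / T_A) by ring, neg_lt_neg_iff,
          div_lt_div_iff₀ hTA hTB]
      nlinarith [mul_lt_mul_of_pos_left hmT hE]
    have hD : (0:ℝ) < (1 + xA) ^ N * (1 + xB) ^ N := by positivity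
    exact div_lt_div_of_pos_right hkey hD
  · -- energies
    have s0 : ∑ i, ((b0 i : ℕ) : ℝ) = N := by
      rw [Fin.sum_univ_add (f := fun i : Fin (N + N) => ((b0 i : ℕ) : ℝ))]
      have h1 : ∀ i : Fin N, ((b0 (Fin.castAdd N i) : ℕ) : ℝ) = 1 := by
        intro i
        simp [hb0, i.isLt]
      have h2 : ∀ i : Fin N, ((b0 (Fin.natAdd N i) : ℕ) : ℝ) = 0 := by
        intro i
        simp [hb0]
      rw [Finset.sum_congr rfl (fun i _ => h1 i), Finset.sum_congr rfl (fun i _ => h2 i)]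
      simp
    have s1 : ∑ i, ((b1 i : ℕ) : ℝ) = (m + 1 : ℕ) := by
      rw [Fin.sum_univ_add (f := fun i : Fin (N + N) => ((b1 i : ℕ) : ℝ))]
      have h1 : ∀ i : Fin N, ((b1 (Fin.castAdd N i) : ℕ) : ℝ) = 0 := by
        intro i
        have h1 : ((Fin.castAdd N i : Fin (N+N)) : ℕ) < N + 1 := by
          have := i.isLt; simp
        have h2 : (i : ℕ) < N + 1 := by have := i.isLt; omega
        simp [hb1, h1, h2]
      have h2 : ∀ i : Fin N, ((b1 (Fin.natAdd N i) : ℕ) : ℝ)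
          = if (i : ℕ) < 1 then 0 else 1 := by
        intro i
        by_cases hi : (i : ℕ) < 1
        · have hc1 : (i:ℕ) + N < N + 1 := by omega
          have hc2 : N + (i:ℕ) < N + 1 := by omega
          have hi0 : i = 0 := by rw [Fin.ext_iff]; simpa using Nat.lt_one_iff.mp hi
          simp [hb1, hc1, hc2, hi, hi0]
        · have hc1 : ¬ ((i:ℕ) + N < N + 1) := by omega
          have hc2 : ¬ (N + (i:ℕ) < N + 1) := by omega
          have hi0 : i ≠ 0 := by rintro rfl; simp at hi
          simp [hb1, hc1, hc2, hi, hi0]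
      rw [Finset.sum_congr rfl (fun i _ => h1 i), Finset.sum_congr rfl (fun i _ => h2 i),
        Finset.sum_const_zero, zero_add, hN, Fin.sum_univ_succ]
      have hstep : ∀ x : Fin (m+1),
          (if ((x.succ : Fin (m+2)) : ℕ) < 1 then (0:ℝ) else 1) = 1 := by
        intro x; simp [Fin.val_succ]
      rw [Finset.sum_congr rfl (fun x _ => hstep x)]
      simp
    simp only [hh, s0, s1]
    have : ((m + 1 : ℕ) : ℝ) < (N : ℝ) := by rw [hN]; push_cast; linarith
    exact mul_lt_mul_of_pos_left this hE
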